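/- In an ambidextrous adjunction F ⊣ G between 2-categories (i.e., an adjunction where the unit η : id → GF and counit ε : FG → id each admit right adjoints η^R and ε^R as 2-morphisms), the 2-morphism ε^R : id → FG exhibits F as right adjoint to G; in other words, G is simultaneously left and right adjoint to F. -/

import Mathlib

/-!
STATEMENT 0: In an ambidextrous adjunction `F ⊣ G` between 2-categories (the unit `η` and
counit `ε` admit right adjoints `η^R`, `ε^R`), the 2-morphism `ε^R : id → FG` exhibits `F` as
right adjoint to `G`, i.e. `G` is simultaneously left and right adjoint to `F`.

We formalize 2-categories as bicategories, `F`, `G` as pseudofunctors, and the adjunction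
`F ⊣ G` pointwise: its unit and counit components are 1-morphisms, together with the
triangle isomorphisms.  Ambidexterity says each component of the unit and of the counit
admits a right adjoint (as a 1-morphism, `Bicategory.Adjunction`).  The conclusion is that
`(ε^R, η^R)` form the unit and counit of an adjunction `G ⊣ F`, expressed by the existence
of the two triangle isomorphisms.
-/

open CategoryTheory CategoryTheory.Bicategory

namespace AmbidextrousAux

universe w v u w₂ v₂ u₂

variable {B : Type u} [Bicategory.{w, v} B] {a b : B}

/-- An adjunction in a bicategory induces an adjunction of hom-categories via
postcomposition. -/
def homAdj {f : a ⟶ b} {g : b ⟶ a} (adj : Bicategory.Adjunction f g) (x : B) :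
    postcomp x f ⊣ postcomp x g :=
  CategoryTheory.Adjunction.mkOfUnitCounit
  { unit := (rightUnitorNatIso x a).inv ≫ (postcomposing x a a).map adj.unit ≫
      (associatorNatIsoLeft x f g).inv
    counit := (associatorNatIsoLeft x g f).hom ≫ (postcomposing x b b).map adj.counit ≫
      (rightUnitorNatIso x b).hom
    left_triangle := by
      ext h
      dsimp
      calc _ = 𝟙 h ▷ f ⊗≫ h ◁ leftZigzag adj.unit adj.counit ⊗≫ 𝟙 _ := by
              erw [NatTrans.comp_app, NatTrans.comp_app, NatTrans.comp_app]
              erw [rightUnitorNatIso_inv_app, postcomposing_map_app, associatorNatIsoLeft_inv_app,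
                associatorNatIsoLeft_hom_app, postcomposing_map_app, rightUnitorNatIso_hom_app]
              dsimp only [postcomp]; bicategory
        _ = 𝟙 h ▷ f ⊗≫ h ◁ ((λ_ f).hom ≫ (ρ_ f).inv) ⊗≫ 𝟙 _ := by
              rw [adj.left_triangle]
        _ = 𝟙 (h ≫ f) := by bicategory
    right_triangle := by
      ext k
      dsimp
      calc _ = 𝟙 k ▷ g ⊗≫ k ◁ rightZigzag adj.unit adj.counit ⊗≫ 𝟙 _ := by
              erw [NatTrans.comp_app, NatTrans.comp_app, NatTrans.comp_app]
              erw [rightUnitorNatIso_inv_app, postcomposing_map_app, associatorNatIsoLeft_inv_app,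
                associatorNatIsoLeft_hom_app, postcomposing_map_app, rightUnitorNatIso_hom_app]
              dsimp only [postcomp]; bicategory
        _ = 𝟙 k ▷ g ⊗≫ k ◁ ((ρ_ g).hom ≫ (λ_ g).inv) ⊗≫ 𝟙 _ := by
              rw [adj.right_triangle]
        _ = 𝟙 (k ≫ g) := by bicategory }

/-- Uniqueness of right adjoints in a bicategory, up to isomorphism of the left adjoints. -/
def rightAdjUniq {f f' : a ⟶ b} {g g' : b ⟶ a} (adj : Bicategory.Adjunction f g)
    (adj' : Bicategory.Adjunction f' g') (i : f ≅ f') : g ≅ g' :=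
  (λ_ g).symm ≪≫
    (CategoryTheory.Adjunction.rightAdjointUniq (homAdj adj b)
      ((homAdj adj' b).ofNatIsoLeft ((postcomposing b a b).mapIso i).symm)).app (𝟙 b) ≪≫
    (λ_ g')

variable {C : Type u₂} [Bicategory.{w₂, v₂} C]

/-- Pseudofunctors preserve adjunctions. -/
def mapAdj (F : Pseudofunctor B C) {f : a ⟶ b} {g : b ⟶ a}
    (adj : Bicategory.Adjunction f g) :
    Bicategory.Adjunction (F.map f) (F.map g) where
  unit := (F.mapId a).inv ≫ F.map₂ adj.unit ≫ (F.mapComp f g).hom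
  counit := (F.mapComp g f).inv ≫ F.map₂ adj.counit ≫ (F.mapId b).hom
  left_triangle := by
    have h1 : (F.mapComp f g).hom ▷ F.map f ≫ (α_ (F.map f) (F.map g) (F.map f)).hom ≫
        F.map f ◁ (F.mapComp g f).inv =
        (F.mapComp (f ≫ g) f).inv ≫ F.map₂ (α_ f g f).hom ≫ (F.mapComp f (g ≫ f)).hom := by
      rw [F.map₂_associator]; simp
    have h2 : F.map₂ adj.unit ▷ F.map f =
        (F.mapComp (𝟙 a) f).inv ≫ F.map₂ (adj.unit ▷ f) ≫ (F.mapComp (f ≫ g) f).hom := by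
      rw [F.map₂_whisker_right]; simp
    have h3 : F.map f ◁ F.map₂ adj.counit =
        (F.mapComp f (g ≫ f)).inv ≫ F.map₂ (f ◁ adj.counit) ≫ (F.mapComp f (𝟙 b)).hom := by
      rw [F.map₂_whisker_left]; simp
    have lz : adj.unit ▷ f ≫ (α_ f g f).hom ≫ f ◁ adj.counit = (λ_ f).hom ≫ (ρ_ f).inv := by
      calc adj.unit ▷ f ≫ (α_ f g f).hom ≫ f ◁ adj.counit
          = leftZigzag adj.unit adj.counit := by bicategory
        _ = (λ_ f).hom ≫ (ρ_ f).inv := adj.left_triangle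
    have h4 : (F.mapComp (𝟙 a) f).inv ≫ F.map₂ ((λ_ f).hom ≫ (ρ_ f).inv) ≫
        (F.mapComp f (𝟙 b)).hom =
        (F.mapId a).hom ▷ F.map f ≫ (λ_ (F.map f)).hom ≫ (ρ_ (F.map f)).inv ≫
          F.map f ◁ (F.mapId b).inv := by
      rw [Pseudofunctor.mapComp_id_right_hom, Pseudofunctor.mapComp_id_left_inv]
      simp only [PrelaxFunctor.map₂_comp, Category.assoc, ← PrelaxFunctor.map₂_comp_assoc,
        Iso.inv_hom_id, PrelaxFunctor.map₂_id, Category.id_comp]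
    calc leftZigzag ((F.mapId a).inv ≫ F.map₂ adj.unit ≫ (F.mapComp f g).hom)
          ((F.mapComp g f).inv ≫ F.map₂ adj.counit ≫ (F.mapId b).hom)
        = 𝟙 _ ⊗≫ (F.mapId a).inv ▷ F.map f ⊗≫
          (F.map₂ adj.unit ▷ F.map f ≫
            ((F.mapComp f g).hom ▷ F.map f ≫ (α_ _ _ _).hom ≫ F.map f ◁ (F.mapComp g f).inv) ≫
            F.map f ◁ F.map₂ adj.counit) ⊗≫
          F.map f ◁ (F.mapId b).hom ⊗≫ 𝟙 _ := by bicategory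
      _ = 𝟙 _ ⊗≫ (F.mapId a).inv ▷ F.map f ⊗≫
          ((F.mapComp (𝟙 a) f).inv ≫
            F.map₂ (adj.unit ▷ f ≫ (α_ f g f).hom ≫ f ◁ adj.counit) ≫
            (F.mapComp f (𝟙 b)).hom) ⊗≫
          F.map f ◁ (F.mapId b).hom ⊗≫ 𝟙 _ := by
          rw [h1, h2, h3]; simp
      _ = 𝟙 _ ⊗≫ (F.mapId a).inv ▷ F.map f ⊗≫
          ((F.mapId a).hom ▷ F.map f ≫ (λ_ (F.map f)).hom ≫ (ρ_ (F.map f)).inv ≫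
            F.map f ◁ (F.mapId b).inv) ⊗≫
          F.map f ◁ (F.mapId b).hom ⊗≫ 𝟙 _ := by rw [lz, h4]
      _ = 𝟙 _ ⊗≫ ((F.mapId a).inv ≫ (F.mapId a).hom) ▷ F.map f ⊗≫
          ((λ_ (F.map f)).hom ≫ (ρ_ (F.map f)).inv) ⊗≫
          F.map f ◁ ((F.mapId b).inv ≫ (F.mapId b).hom) ⊗≫ 𝟙 _ := by bicategory
      _ = (λ_ (F.map f)).hom ≫ (ρ_ (F.map f)).inv := by
          rw [Iso.inv_hom_id, Iso.inv_hom_id]; bicategory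
  right_triangle := by
    have base : (F.mapComp g f).hom ▷ F.map g ≫ (α_ (F.map g) (F.map f) (F.map g)).hom ≫
        F.map g ◁ (F.mapComp f g).inv =
        (F.mapComp (g ≫ f) g).inv ≫ F.map₂ (α_ g f g).hom ≫ (F.mapComp g (f ≫ g)).hom := by
      rw [F.map₂_associator]; simp
    have h1 : F.map g ◁ (F.mapComp f g).hom ≫ (α_ (F.map g) (F.map f) (F.map g)).inv ≫
        (F.mapComp g f).inv ▷ F.map g =
        (F.mapComp g (f ≫ g)).inv ≫ F.map₂ (α_ g f g).inv ≫ (F.mapComp (g ≫ f) g).hom := by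
      rw [← cancel_epi ((F.mapComp g f).hom ▷ F.map g ≫ (α_ (F.map g) (F.map f) (F.map g)).hom ≫
        F.map g ◁ (F.mapComp f g).inv), base]
      simp only [Category.assoc, Iso.hom_inv_id_assoc, Iso.inv_hom_id_assoc,
        ← PrelaxFunctor.map₂_comp_assoc, Iso.hom_inv_id, PrelaxFunctor.map₂_id,
        Category.id_comp]
      simp
    have h2 : F.map g ◁ F.map₂ adj.unit =
        (F.mapComp g (𝟙 a)).inv ≫ F.map₂ (g ◁ adj.unit) ≫ (F.mapComp g (f ≫ g)).hom := by
      rw [F.map₂_whisker_left]; simp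
    have h3 : F.map₂ adj.counit ▷ F.map g =
        (F.mapComp (g ≫ f) g).inv ≫ F.map₂ (adj.counit ▷ g) ≫ (F.mapComp (𝟙 b) g).hom := by
      rw [F.map₂_whisker_right]; simp
    have rz : g ◁ adj.unit ≫ (α_ g f g).inv ≫ adj.counit ▷ g = (ρ_ g).hom ≫ (λ_ g).inv := by
      calc g ◁ adj.unit ≫ (α_ g f g).inv ≫ adj.counit ▷ g
          = rightZigzag adj.unit adj.counit := by bicategory
        _ = (ρ_ g).hom ≫ (λ_ g).inv := adj.right_triangle
    have h4 : (F.mapComp g (𝟙 a)).inv ≫ F.map₂ ((ρ_ g).hom ≫ (λ_ g).inv) ≫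
        (F.mapComp (𝟙 b) g).hom =
        F.map g ◁ (F.mapId a).hom ≫ (ρ_ (F.map g)).hom ≫ (λ_ (F.map g)).inv ≫
          (F.mapId b).inv ▷ F.map g := by
      rw [Pseudofunctor.mapComp_id_left_hom, Pseudofunctor.mapComp_id_right_inv]
      simp only [PrelaxFunctor.map₂_comp, Category.assoc, ← PrelaxFunctor.map₂_comp_assoc,
        Iso.inv_hom_id, PrelaxFunctor.map₂_id, Category.id_comp]
    calc rightZigzag ((F.mapId a).inv ≫ F.map₂ adj.unit ≫ (F.mapComp f g).hom)
          ((F.mapComp g f).inv ≫ F.map₂ adj.counit ≫ (F.mapId b).hom)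
        = 𝟙 _ ⊗≫ F.map g ◁ (F.mapId a).inv ⊗≫
          (F.map g ◁ F.map₂ adj.unit ≫
            (F.map g ◁ (F.mapComp f g).hom ≫ (α_ _ _ _).inv ≫ (F.mapComp g f).inv ▷ F.map g) ≫
            F.map₂ adj.counit ▷ F.map g) ⊗≫
          (F.mapId b).hom ▷ F.map g ⊗≫ 𝟙 _ := by bicategory
      _ = 𝟙 _ ⊗≫ F.map g ◁ (F.mapId a).inv ⊗≫
          ((F.mapComp g (𝟙 a)).inv ≫
            F.map₂ (g ◁ adj.unit ≫ (α_ g f g).inv ≫ adj.counit ▷ g) ≫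
            (F.mapComp (𝟙 b) g).hom) ⊗≫
          (F.mapId b).hom ▷ F.map g ⊗≫ 𝟙 _ := by
          rw [h1, h2, h3]; simp
      _ = 𝟙 _ ⊗≫ F.map g ◁ (F.mapId a).inv ⊗≫
          (F.map g ◁ (F.mapId a).hom ≫ (ρ_ (F.map g)).hom ≫ (λ_ (F.map g)).inv ≫
            (F.mapId b).inv ▷ F.map g) ⊗≫
          (F.mapId b).hom ▷ F.map g ⊗≫ 𝟙 _ := by rw [rz, h4]
      _ = 𝟙 _ ⊗≫ F.map g ◁ ((F.mapId a).inv ≫ (F.mapId a).hom) ⊗≫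
          ((ρ_ (F.map g)).hom ≫ (λ_ (F.map g)).inv) ⊗≫
          ((F.mapId b).inv ≫ (F.mapId b).hom) ▷ F.map g ⊗≫ 𝟙 _ := by bicategory
      _ = (ρ_ (F.map g)).hom ≫ (λ_ (F.map g)).inv := by
          rw [Iso.inv_hom_id, Iso.inv_hom_id]; bicategory

end AmbidextrousAux

open AmbidextrousAux

theorem ambidextrous_adjunction_right_adjoint
    {B C : Type*} [Bicategory B] [Bicategory C]
    (F : Pseudofunctor B C) (G : Pseudofunctor C B)
    -- the adjunction F ⊣ G, pointwise: unit, counit and triangle isomorphisms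
    (η : ∀ X : B, X ⟶ G.obj (F.obj X))
    (ε' : ∀ Y : C, F.obj (G.obj Y) ⟶ Y)
    (t₁ : ∀ X : B, (F.map (η X) ≫ ε' (F.obj X)) ≅ 𝟙 (F.obj X))
    (t₂ : ∀ Y : C, (η (G.obj Y) ≫ G.map (ε' Y)) ≅ 𝟙 (G.obj Y))
    -- ambidexterity: the unit and the counit admit right adjoints η^R and ε^R
    (ηR : ∀ X : B, G.obj (F.obj X) ⟶ X)
    (adjη : ∀ X : B, Bicategory.Adjunction (η X) (ηR X))
    (εR : ∀ Y : C, Y ⟶ F.obj (G.obj Y))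
    (adjε : ∀ Y : C, Bicategory.Adjunction (ε' Y) (εR Y)) :
    -- conclusion: ε^R is the unit and η^R the counit of an adjunction G ⊣ F,
    -- i.e. G is also *left* adjoint to F (triangle isomorphisms for G ⊣ F)
    (∀ X : B, Nonempty ((εR (F.obj X) ≫ F.map (ηR X)) ≅ 𝟙 (F.obj X))) ∧
    (∀ Y : C, Nonempty ((G.map (εR Y) ≫ ηR (G.obj Y)) ≅ 𝟙 (G.obj Y))) := by
  constructor
  · intro X
    exact ⟨rightAdjUniq ((mapAdj F (adjη X)).comp (adjε (F.obj X)))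
      (Bicategory.Adjunction.id (F.obj X)) (t₁ X)⟩
  · intro Y
    exact ⟨rightAdjUniq ((adjη (G.obj Y)).comp (mapAdj G (adjε Y)))
      (Bicategory.Adjunction.id (G.obj Y)) (t₂ Y)⟩
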